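/- For any indices r ≠ s with 1 ≤ r ≤ q_b and 1 ≤ s ≤ q_b, the vector e_r − e_s (difference of standard basis vectors) is an eigenvector of the nested-case transfer matrix T with eigenvalue λ_a = (ω_in − ω_out)/(ω_in + (q_b − 1)·ω_out + (q⋆ − q_b)·γ·ω_out); in particular λ_a is an eigenvalue of T. -/

import Mathlib

open Matrix BigOperators

/-- The nested-case transfer matrix `T` of CRSBM: coordinates are indexed
by `Fin qs` (the first `qb` coordinates correspond to the brother communities
of node `i`'s own category). -/
noncomputable def nestedT (qs qb : ℕ) (γ ωin ωout : ℝ) :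
    Matrix (Fin qs) (Fin qs) ℝ :=
  let Z : ℝ := (qb : ℝ) * γ + ((qs : ℝ) - (qb : ℝ))
  let ψ : Fin qs → ℝ := fun r => if (r : ℕ) < qb then γ / Z else 1 / Z
  let F : Matrix (Fin qs) (Fin qs) ℝ :=
    Matrix.diagonal (fun r => if (r : ℕ) < qb then (1 : ℝ) else γ)
  let Ω : Matrix (Fin qs) (Fin qs) ℝ :=
    Matrix.of fun r s => if r = s then ωin else ωout
  let M : Matrix (Fin qs) (Fin qs) ℝ := Matrix.diagonal ψ * Ω * F
  let D : Matrix (Fin qs) (Fin qs) ℝ := Matrix.diagonal (fun r => ∑ s, M r s)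
  (1 - Matrix.vecMulVec ψ (fun _ => 1)) * (D⁻¹ * M)

lemma sum_f_aux (qs qb : ℕ) (h : qb ≤ qs) (γ : ℝ) :
    ∑ b : Fin qs, (if (b : ℕ) < qb then (1:ℝ) else γ)
      = (qb : ℝ) + ((qs : ℝ) - (qb : ℝ)) * γ := by
  rw [Fin.sum_univ_eq_sum_range (fun i => if i < qb then (1:ℝ) else γ) qs]
  rw [Finset.range_eq_Ico, ← Finset.sum_Ico_consecutive _ (Nat.zero_le qb) h]
  have h1 : ∑ i ∈ Finset.Ico 0 qb, (if i < qb then (1:ℝ) else γ) = (qb : ℝ) := by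
    rw [Finset.sum_congr rfl (fun x hx => if_pos (Finset.mem_Ico.1 hx).2)]
    simp
  have h2 : ∑ i ∈ Finset.Ico qb qs, (if i < qb then (1:ℝ) else γ)
      = ((qs:ℝ)-(qb:ℝ)) * γ := by
    rw [Finset.sum_congr rfl (fun x hx => if_neg (not_lt.2 (Finset.mem_Ico.1 hx).1))]
    rw [Finset.sum_const, Nat.card_Ico, nsmul_eq_mul, Nat.cast_sub h]
  rw [h1, h2]

lemma rowsum_aux (qs qb : ℕ) (h : qb ≤ qs) (γ ωin ωout : ℝ) (a : Fin qs)
    (ha : (a : ℕ) < qb) :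
    ∑ b : Fin qs, (if a = b then ωin else ωout) * (if (b : ℕ) < qb then (1:ℝ) else γ)
      = ωin + ((qb:ℝ)-1)*ωout + ((qs:ℝ)-(qb:ℝ))*γ*ωout := by
  have key : ∀ b : Fin qs,
      (if a = b then ωin else ωout) * (if (b : ℕ) < qb then (1:ℝ) else γ)
      = ωout * (if (b : ℕ) < qb then (1:ℝ) else γ)
        + (if a = b then (ωin - ωout) * (if (b : ℕ) < qb then (1:ℝ) else γ) else 0) := by
    intro b; by_cases hb : a = b <;> simp [hb] <;> split <;> ring
  simp_rw [key]
  rw [Finset.sum_add_distrib, ← Finset.mul_sum, Finset.sum_ite_eq,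
    if_pos (Finset.mem_univ a), if_pos ha, sum_f_aux qs qb h γ]
  ring

/-- For indices `r ≠ s` both among the first `qb` coordinates (i.e. within
node `i`'s own category), `e_r - e_s` is an eigenvector of the nested-case
transfer matrix `T` with eigenvalue
`λ_a = (ωin - ωout)/(ωin + (qb - 1)·ωout + (qs - qb)·γ·ωout)`;
in particular `λ_a` is an eigenvalue of `T`. -/
theorem nestedT_eigenvector_inside (qs qb : ℕ) (hqb : 2 ≤ qb) (hqs : 2 * qb ≤ qs)
    (γ ωin ωout : ℝ) (hγ : 1 < γ) (hω : ωout < ωin) (hω0 : 0 < ωout)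
    (r s : Fin qs) (hr : (r : ℕ) < qb) (hs : (s : ℕ) < qb) (hrs : r ≠ s) :
    nestedT qs qb γ ωin ωout *ᵥ (Pi.single r 1 - Pi.single s 1) =
      ((ωin - ωout) / (ωin + ((qb : ℝ) - 1) * ωout + ((qs : ℝ) - (qb : ℝ)) * γ * ωout)) •
        (Pi.single r 1 - Pi.single s 1) ∧
    Module.End.HasEigenvalue (Matrix.toLin' (nestedT qs qb γ ωin ωout))
      ((ωin - ωout) / (ωin + ((qb : ℝ) - 1) * ωout + ((qs : ℝ) - (qb : ℝ)) * γ * ωout)) := by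
  have hqbqs : qb ≤ qs := le_trans (Nat.le_mul_of_pos_left qb two_pos) hqs
  have hγ0 : (0:ℝ) < γ := lt_trans one_pos hγ
  set Z : ℝ := (qb : ℝ) * γ + ((qs : ℝ) - (qb : ℝ)) with hZdef
  have hcast : (0:ℝ) ≤ (qs : ℝ) - (qb : ℝ) := by
    have := Nat.cast_le (α := ℝ) |>.2 hqbqs; linarith
  have hqb1 : (2:ℝ) ≤ (qb : ℝ) := by exact_mod_cast hqb
  have hZ0 : 0 < Z := by
    have : 0 < (qb : ℝ) * γ := by positivity
    rw [hZdef]; linarith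
  set S : ℝ := ωin + ((qb:ℝ)-1)*ωout + ((qs:ℝ)-(qb:ℝ))*γ*ωout with hSdef
  have hS0 : 0 < S := by
    have h1 : 0 < ((qb:ℝ)-1)*ωout := by
      apply mul_pos _ hω0; linarith
    have h2 : 0 ≤ ((qs:ℝ)-(qb:ℝ))*γ*ωout := by positivity
    have : 0 < ωin := lt_trans hω0 hω
    rw [hSdef]; linarith
  set ψ : Fin qs → ℝ := fun t => if (t : ℕ) < qb then γ / Z else 1 / Z with hψdef
  set F : Matrix (Fin qs) (Fin qs) ℝ :=
    Matrix.diagonal (fun t => if (t : ℕ) < qb then (1 : ℝ) else γ) with hFdef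
  set Ω : Matrix (Fin qs) (Fin qs) ℝ :=
    Matrix.of (fun t u => if t = u then ωin else ωout) with hΩdef
  set M : Matrix (Fin qs) (Fin qs) ℝ := Matrix.diagonal ψ * Ω * F with hMdef
  set d : Fin qs → ℝ := fun t => ∑ u, M t u with hddef
  set v : Fin qs → ℝ := Pi.single r 1 - Pi.single s 1 with hvdef
  have hT : nestedT qs qb γ ωin ωout
      = (1 - Matrix.vecMulVec ψ (fun _ => 1)) * ((Matrix.diagonal d)⁻¹ * M) := rfl
  -- entries of M
  have hMentry : ∀ a b : Fin qs,
      M a b = ψ a * (if a = b then ωin else ωout) * (if (b : ℕ) < qb then (1:ℝ) else γ) := by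
    intro a b
    rw [hMdef, hFdef, Matrix.mul_diagonal, Matrix.diagonal_mul]
    rfl
  -- M *ᵥ v
  have hMv : M *ᵥ v = ((ωin - ωout) * (γ / Z)) • v := by
    funext a
    rw [hvdef, Matrix.mulVec_sub, Matrix.mulVec_single, Matrix.mulVec_single]
    simp only [Pi.sub_apply, Pi.smul_apply, op_smul_eq_mul, Matrix.col_apply, mul_one, smul_eq_mul]
    rw [hMentry a r, hMentry a s, if_pos hr, if_pos hs]
    by_cases har : a = r
    · subst har
      rw [if_pos rfl, if_neg hrs]
      have : ψ a = γ / Z := by rw [hψdef]; simp [hr]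
      simp [Pi.single_apply, hrs, this]
      ring
    · by_cases has : a = s
      · subst has
        rw [if_neg har, if_pos rfl]
        have : ψ a = γ / Z := by rw [hψdef]; simp [hs]
        simp [Pi.single_apply, har, this, Ne.symm hrs]
        ring
      · rw [if_neg har, if_neg has]
        simp [Pi.single_apply, har, has]
  -- values of d on the first block
  have hdval : ∀ a : Fin qs, (a : ℕ) < qb → d a = (γ / Z) * S := by
    intro a ha
    have : d a = ψ a * ∑ b : Fin qs,
        (if a = b then ωin else ωout) * (if (b : ℕ) < qb then (1:ℝ) else γ) := by
      rw [hddef]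
      simp only [hMentry]
      rw [Finset.mul_sum]
      congr 1; funext b; ring
    rw [this, rowsum_aux qs qb hqbqs γ ωin ωout a ha, hψdef]
    simp [ha, hSdef]
  -- D⁻¹ *ᵥ v
  have hdr : d r = (γ / Z) * S := hdval r hr
  have hds : d s = (γ / Z) * S := hdval s hs
  have hd0 : ∀ a : Fin qs, 0 < d a := by
    intro a
    rw [hddef]
    apply Finset.sum_pos _ ⟨r, Finset.mem_univ r⟩
    intro b _
    rw [hMentry a b, hψdef]
    have hin : 0 < ωin := lt_trans hω0 hω
    dsimp only
    split <;> split <;> split <;> positivity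
  have hDinv : (Matrix.diagonal d)⁻¹ = Matrix.diagonal (fun a => (d a)⁻¹) := by
    apply Matrix.inv_eq_right_inv
    rw [Matrix.diagonal_mul_diagonal]
    convert Matrix.diagonal_one with a
    exact mul_inv_cancel₀ (ne_of_gt (hd0 a))
  have hDv : (Matrix.diagonal d)⁻¹ *ᵥ v = ((γ / Z) * S)⁻¹ • v := by
    rw [hDinv, hvdef, Matrix.mulVec_sub, Matrix.diagonal_mulVec_single,
      Matrix.diagonal_mulVec_single, hdr, hds]
    funext a
    simp only [Pi.sub_apply, Pi.smul_apply, smul_eq_mul, mul_one]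
    by_cases har : a = r <;> by_cases has : a = s <;>
      simp [Pi.single_apply, har, has, hrs, Ne.symm hrs] <;> ring
  -- combine steps
  have hlam : (ωin - ωout) * (γ / Z) * ((γ / Z) * S)⁻¹ = (ωin - ωout) / S := by
    have hZne : Z ≠ 0 := ne_of_gt hZ0
    have hSne : S ≠ 0 := ne_of_gt hS0
    field_simp
  have hsum : ∑ b, v b = 0 := by
    rw [hvdef]
    simp only [Pi.sub_apply, Finset.sum_sub_distrib]
    rw [Finset.sum_eq_single r (fun b _ hb => Pi.single_eq_of_ne hb 1) (by simp),
      Finset.sum_eq_single s (fun b _ hb => Pi.single_eq_of_ne hb 1) (by simp)]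
    simp
  have hproj : Matrix.vecMulVec ψ (fun _ => (1:ℝ)) *ᵥ v = 0 := by
    funext a
    simp only [Matrix.mulVec, Matrix.vecMulVec_apply, dotProduct, mul_one]
    rw [← Finset.mul_sum, hsum, mul_zero]
    rfl
  have key : nestedT qs qb γ ωin ωout *ᵥ v = ((ωin - ωout) / S) • v := by
    rw [hT, ← Matrix.mulVec_mulVec, ← Matrix.mulVec_mulVec, hMv,
      Matrix.mulVec_smul, hDv, smul_smul, hlam, Matrix.mulVec_smul,
      Matrix.sub_mulVec, Matrix.one_mulVec, hproj, sub_zero]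
  refine ⟨key, ?_⟩
  have hv0 : v ≠ 0 := by
    intro h
    have := congrFun h r
    rw [hvdef] at this
    simp [Pi.single_apply, Ne.symm hrs] at this
  exact Module.End.hasEigenvalue_of_hasEigenvector
    ⟨by rw [Module.End.mem_eigenspace_iff, Matrix.toLin'_apply, key], hv0⟩
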